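/- Fix s > 0, β₁ > 1 > 0 > β₂, K > 0 and g > 0. Define b(y) = g·(s - y) for 0 < y < s. Then b is a solution of the ordinary differential equation b'(y) = Σ_{i=1,2} [β_{3-i} b(y) / ((β_i - 1)(β_{3-i} - 1) K b(y) - β_i β_{3-i} (s - y))] · [((s-y)/b(y))^{β_i} / (((s-y)/b(y))^{β_i} - ((s-y)/b(y))^{β_{3-i}})] if and only if g satisfies Σ_{i=1,2} (-1)^i (β_i(β_{3-i} - 1) - (β_i - 1)(β_{3-i} - 1) K g) g^{β_i} = 0. -/

import Mathlib

lemma aux_sum (x g D A B β₁ β₂ : ℝ) (hx : x ≠ 0) (hD : D ≠ 0)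
    (hA : A ≠ 0) (hB : B ≠ 0) (hBA : B - A ≠ 0) :
    β₂ * (g * x) / (x * D) * (A⁻¹ / (A⁻¹ - B⁻¹)) +
      β₁ * (g * x) / (x * D) * (B⁻¹ / (B⁻¹ - A⁻¹)) =
      g * (β₂ * B - β₁ * A) / (D * (B - A)) := by
  rw [inv_sub_inv hA hB, inv_sub_inv hB hA]
  have hAB : A - B ≠ 0 := fun h => hBA (by linarith)
  field_simp
  ring

theorem linear_boundary_solves_ode (s β₁ β₂ K g : ℝ) (hs : 0 < s)
    (hβ₁ : 1 < β₁) (hβ₂ : β₂ < 0) (hK : 0 < K) (hg : 0 < g)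
    (b : ℝ → ℝ) (hb : ∀ y, b y = g * (s - y))
    (hden₁ : ∀ y ∈ Set.Ioo 0 s,
      ((s - y) / b y) ^ β₁ - ((s - y) / b y) ^ β₂ ≠ 0)
    (hden₂ : ∀ y ∈ Set.Ioo 0 s,
      (β₁ - 1) * (β₂ - 1) * K * b y - β₁ * β₂ * (s - y) ≠ 0) :
    (∀ y ∈ Set.Ioo 0 s,
      deriv b y =
        β₂ * b y / ((β₁ - 1) * (β₂ - 1) * K * b y - β₁ * β₂ * (s - y)) *
          (((s - y) / b y) ^ β₁ / (((s - y) / b y) ^ β₁ - ((s - y) / b y) ^ β₂)) +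
        β₁ * b y / ((β₂ - 1) * (β₁ - 1) * K * b y - β₂ * β₁ * (s - y)) *
          (((s - y) / b y) ^ β₂ / (((s - y) / b y) ^ β₂ - ((s - y) / b y) ^ β₁)))
    ↔ (-(β₁ * (β₂ - 1) - (β₁ - 1) * (β₂ - 1) * K * g) * g ^ β₁ +
        (β₂ * (β₁ - 1) - (β₂ - 1) * (β₁ - 1) * K * g) * g ^ β₂ = 0) := by
  have hg' : g ≠ 0 := ne_of_gt hg
  set A := g ^ β₁ with hAdef
  set B := g ^ β₂ with hBdef
  have hA : 0 < A := Real.rpow_pos_of_pos hg _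
  have hB : 0 < B := Real.rpow_pos_of_pos hg _
  set D := (β₁ - 1) * (β₂ - 1) * K * g - β₁ * β₂ with hDdef
  have hderiv : ∀ y, deriv b y = -g := by
    intro y
    have hbfun : b = fun z => g * s - g * z := funext fun z => by rw [hb]; ring
    rw [hbfun]
    have h : HasDerivAt (fun z : ℝ => g * s - g * z) (-g) y := by
      simpa using ((hasDerivAt_id y).const_mul g).const_sub (g * s)
    exact h.deriv
  have main : ∀ y ∈ Set.Ioo 0 s,
      (deriv b y =
        β₂ * b y / ((β₁ - 1) * (β₂ - 1) * K * b y - β₁ * β₂ * (s - y)) *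
          (((s - y) / b y) ^ β₁ / (((s - y) / b y) ^ β₁ - ((s - y) / b y) ^ β₂)) +
        β₁ * b y / ((β₂ - 1) * (β₁ - 1) * K * b y - β₂ * β₁ * (s - y)) *
          (((s - y) / b y) ^ β₂ / (((s - y) / b y) ^ β₂ - ((s - y) / b y) ^ β₁)))
      ↔ ((D + β₁) * A - (D + β₂) * B = 0) := by
    intro y hy
    have hsy : 0 < s - y := by linarith [hy.2]
    have hsy' : s - y ≠ 0 := ne_of_gt hsy
    have hby : b y = g * (s - y) := hb y
    have hc : (s - y) / b y = g⁻¹ := by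
      rw [hby]
      field_simp
    have h1 := hden₁ y hy
    have h2 := hden₂ y hy
    rw [hc, Real.inv_rpow hg.le, Real.inv_rpow hg.le, ← hAdef, ← hBdef] at h1 ⊢
    rw [hby] at h2 ⊢
    have hD : D ≠ 0 := by
      intro h
      exact h2 (by rw [hDdef] at h; linear_combination (s - y) * h)
    have hABne : B - A ≠ 0 := by
      intro h
      exact h1 (by rw [show A = B by linarith]; ring)
    rw [hderiv y]
    have e1 : (β₁ - 1) * (β₂ - 1) * K * (g * (s - y)) - β₁ * β₂ * (s - y) =
        (s - y) * D := by rw [hDdef]; ring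
    have e2 : (β₂ - 1) * (β₁ - 1) * K * (g * (s - y)) - β₂ * β₁ * (s - y) =
        (s - y) * D := by rw [hDdef]; ring
    rw [e1, e2, aux_sum (s - y) g D A B β₁ β₂ hsy' hD hA.ne' hB.ne' hABne,
      eq_div_iff (mul_ne_zero hD hABne)]
    constructor
    · intro h
      have h' : D * (B - A) = -(β₂ * B - β₁ * A) :=
        mul_left_cancel₀ hg' (by linear_combination -h)
      linear_combination -h'
    · intro h
      linear_combination g * h
  have htarget : (-(β₁ * (β₂ - 1) - (β₁ - 1) * (β₂ - 1) * K * g) * A +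
      (β₂ * (β₁ - 1) - (β₂ - 1) * (β₁ - 1) * K * g) * B) = (D + β₁) * A - (D + β₂) * B := by
    rw [hDdef]; ring
  have hmem : s / 2 ∈ Set.Ioo 0 s := ⟨by linarith, by linarith⟩
  constructor
  · intro h
    rw [htarget]
    exact (main _ hmem).1 (h _ hmem)
  · intro h y hy
    rw [htarget] at h
    exact (main y hy).2 h
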